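/- Let $a \in \mathbb{Z}\setminus\{0\}$ be square-free, let $(\mu,\lambda) \in \mathbb{Z}^2_{\mathrm{prim}}$ with $\mu \neq 0$, set $d = \gcd(a,\mu) \ge 1$, $\mu = \mu_1 d$, $a = a_1 d$. Then for every $B > 0$, $$\#\{(t_0,t_1,t_2,t_3)\in\mathbb{Z}^4_{\mathrm{prim}} : (t_0,t_1)\neq(0,0),\ \lambda t_0 = \mu t_1,\ \mu\lambda t_2 = -(\mu^2+a\lambda^2)t_3,\ t_0t_1t_2+t_3(t_0^2+at_1^2)=0,\ t_0^2+t_1^2+t_2^2+t_3^2 \le B^2\}$$ $$= \#\{(\tau_0,\tau_3)\in\mathbb{Z}^2_{\mathrm{prim}} : \tau_0 \neq 0,\ (\mu^2+\lambda^2)\tau_0^2 + \big((\mu_1^2 d + a_1\lambda^2)^2+(\mu_1\lambda)^2\big)\tau_3^2 \le B^2\}.$$ -/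

import Mathlib

lemma aux_solve {p q x y : ℤ} (hcop : IsCoprime p q) (h : p * x = -(q * y))
    (hpq : p ≠ 0 ∨ q ≠ 0) : ∃ τ, x = -(q * τ) ∧ y = p * τ := by
  rcases eq_or_ne p 0 with hp | hp
  · subst hp
    have hqu : IsUnit q := isCoprime_zero_left.mp hcop
    have hq2 : q * q = 1 := by
      rcases Int.isUnit_iff.mp hqu with h1 | h1 <;> simp [h1]
    have hq0 : q ≠ 0 := by
      rcases Int.isUnit_iff.mp hqu with h1 | h1 <;> simp [h1]
    have hy : y = 0 := by
      have h0 : q * y = 0 := by linarith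
      rcases mul_eq_zero.mp h0 with h' | h'
      · exact absurd h' hq0
      · exact h'
    exact ⟨-(q * x), by linear_combination (-x) * hq2, by simp [hy]⟩
  · have hdvd : p ∣ y := by
      refine hcop.dvd_of_dvd_mul_right ⟨-x, ?_⟩
      linarith
    obtain ⟨τ, hτ⟩ := hdvd
    refine ⟨τ, ?_, hτ⟩
    have h2 : p * x = p * (-(q * τ)) := by rw [hτ] at h; linarith
    exact mul_left_cancel₀ hp h2

lemma aux_gcd (p q r s τ₀ τ₃ : ℤ) (hpq : Int.gcd p q = 1) (hrs : Int.gcd r s = 1) :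
    Int.gcd (p * τ₀) (Int.gcd (q * τ₀) (Int.gcd (r * τ₃) (s * τ₃))) = Int.gcd τ₀ τ₃ := by
  simp only [Int.gcd, Int.natAbs_natCast, Int.natAbs_mul] at *
  rw [← Nat.gcd_assoc, Nat.gcd_mul_right, Nat.gcd_mul_right, hpq, hrs, one_mul, one_mul]

/-- parametrization of the primitive points of bounded height on the fiber
`V ∩ V_y`, `y = (μ:λ)` with `μ ≠ 0`, of the non-normal cubic surface
`t₀t₁t₂ + t₃(t₀² + a t₁²) = 0`. -/
theorem stmt_8 (a : ℤ) (ha : a ≠ 0) (hsq : Squarefree a)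
    (μ lam : ℤ) (hμ : μ ≠ 0) (hprim : Int.gcd μ lam = 1)
    (d μ₁ a₁ : ℤ) (hd : d = Int.gcd a μ) (hd1 : 1 ≤ d)
    (hμ₁ : μ = μ₁ * d) (ha₁ : a = a₁ * d)
    (B : ℝ) (hB : 0 < B) :
    Set.ncard {t : ℤ × ℤ × ℤ × ℤ |
        (t ≠ 0 ∧ Int.gcd t.1 (Int.gcd t.2.1 (Int.gcd t.2.2.1 t.2.2.2)) = 1) ∧
        (t.1, t.2.1) ≠ (0, 0) ∧
        lam * t.1 = μ * t.2.1 ∧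
        μ * lam * t.2.2.1 = -((μ ^ 2 + a * lam ^ 2) * t.2.2.2) ∧
        t.1 * t.2.1 * t.2.2.1 + t.2.2.2 * (t.1 ^ 2 + a * t.2.1 ^ 2) = 0 ∧
        (t.1 : ℝ) ^ 2 + (t.2.1 : ℝ) ^ 2 + (t.2.2.1 : ℝ) ^ 2 + (t.2.2.2 : ℝ) ^ 2 ≤ B ^ 2} =
    Set.ncard {τ : ℤ × ℤ |
        (τ ≠ 0 ∧ Int.gcd τ.1 τ.2 = 1) ∧ τ.1 ≠ 0 ∧
        ((μ : ℝ) ^ 2 + (lam : ℝ) ^ 2) * (τ.1 : ℝ) ^ 2 +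
          (((μ₁ : ℝ) ^ 2 * (d : ℝ) + (a₁ : ℝ) * (lam : ℝ) ^ 2) ^ 2 +
            ((μ₁ : ℝ) * (lam : ℝ)) ^ 2) * (τ.2 : ℝ) ^ 2 ≤ B ^ 2} := by
  have hd0 : d ≠ 0 := by omega
  have hμ₁0 : μ₁ ≠ 0 := fun h => hμ (by rw [hμ₁, h, zero_mul])
  have hcml : IsCoprime μ lam := Int.isCoprime_iff_gcd_eq_one.mpr hprim
  have hcm1l : IsCoprime μ₁ lam := by rw [hμ₁] at hcml; exact hcml.of_mul_left_left
  have hcdl : IsCoprime d lam := by rw [hμ₁] at hcml; exact hcml.of_mul_left_right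
  -- gcd a₁ d = 1 from squarefreeness
  have hca₁d : IsCoprime a₁ d := by
    rw [Int.isCoprime_iff_gcd_eq_one]
    have hdvd : ((Int.gcd a₁ d : ℤ)) * (Int.gcd a₁ d : ℤ) ∣ a := by
      rw [ha₁]
      exact mul_dvd_mul (Int.gcd_dvd_left _ _) (Int.gcd_dvd_right _ _)
    have := hsq _ hdvd
    rcases Int.isUnit_iff.mp this with h1 | h1 <;> omega
  have hcμ₁a₁ : IsCoprime μ₁ a₁ := by
    rw [Int.isCoprime_iff_gcd_eq_one]
    have h1 : (Int.gcd μ₁ a₁ : ℤ) ∣ d := by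
      rw [hd]
      refine Int.dvd_coe_gcd (dvd_trans (Int.gcd_dvd_right _ _) ⟨d, ha₁⟩)
        (dvd_trans (Int.gcd_dvd_left _ _) ⟨d, hμ₁⟩)
    have h2 : (Int.gcd μ₁ a₁ : ℤ) ∣ (Int.gcd a₁ d : ℤ) :=
      Int.dvd_coe_gcd (Int.gcd_dvd_right _ _) h1
    have h3 : Int.gcd a₁ d = 1 := Int.isCoprime_iff_gcd_eq_one.mp hca₁d
    have h4 : Int.gcd μ₁ a₁ ∣ Int.gcd a₁ d := Int.natCast_dvd_natCast.mp h2
    rw [h3] at h4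
    exact Nat.dvd_one.mp h4
  set E : ℤ := μ₁ ^ 2 * d + a₁ * lam ^ 2 with hEdef
  have hcμ₁E : IsCoprime μ₁ E := by
    have h1 : IsCoprime μ₁ (a₁ * lam ^ 2) := hcμ₁a₁.mul_right (hcm1l.pow_right)
    have h2 := h1.add_mul_left_right (μ₁ * d)
    have he : a₁ * lam ^ 2 + μ₁ * (μ₁ * d) = E := by rw [hEdef]; ring
    rwa [he] at h2
  have hclE : IsCoprime lam E := by
    have h1 : IsCoprime lam (μ₁ ^ 2 * d) := (hcm1l.symm.pow_right).mul_right hcdl.symm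
    have h2 := h1.add_mul_left_right (a₁ * lam)
    have he : μ₁ ^ 2 * d + lam * (a₁ * lam) = E := by rw [hEdef]; ring
    rwa [he] at h2
  have hcm1lE : IsCoprime (μ₁ * lam) E := hcμ₁E.mul_left hclE
  have hE0 : μ₁ * lam ≠ 0 ∨ E ≠ 0 := by
    rcases eq_or_ne lam 0 with hl | hl
    · right
      rw [hEdef, hl]
      have : μ₁ ^ 2 * d ≠ 0 := mul_ne_zero (pow_ne_zero 2 hμ₁0) hd0
      simpa using this
    · exact Or.inl (mul_ne_zero hμ₁0 hl)
  have hgcd2 : Int.gcd (-E) (μ₁ * lam) = 1 :=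
    Int.isCoprime_iff_gcd_eq_one.mp hcm1lE.symm.neg_left
  -- the parametrizing map
  set f : ℤ × ℤ → ℤ × ℤ × ℤ × ℤ :=
    fun τ => (μ * τ.1, lam * τ.1, -E * τ.2, μ₁ * lam * τ.2) with hfdef
  have hinj : Function.Injective f := by
    intro x y hxy
    rw [hfdef] at hxy
    simp only [Prod.mk.injEq] at hxy
    obtain ⟨h1, h2, h3, h4⟩ := hxy
    have hx1 : x.1 = y.1 := mul_left_cancel₀ hμ h1
    have hx2 : x.2 = y.2 := by
      rcases hE0 with h | h
      · exact mul_left_cancel₀ h h4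
      · exact mul_left_cancel₀ (neg_ne_zero.mpr h) h3
    exact Prod.ext hx1 hx2
  have hSeq : {t : ℤ × ℤ × ℤ × ℤ |
        (t ≠ 0 ∧ Int.gcd t.1 (Int.gcd t.2.1 (Int.gcd t.2.2.1 t.2.2.2)) = 1) ∧
        (t.1, t.2.1) ≠ (0, 0) ∧
        lam * t.1 = μ * t.2.1 ∧
        μ * lam * t.2.2.1 = -((μ ^ 2 + a * lam ^ 2) * t.2.2.2) ∧
        t.1 * t.2.1 * t.2.2.1 + t.2.2.2 * (t.1 ^ 2 + a * t.2.1 ^ 2) = 0 ∧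
        (t.1 : ℝ) ^ 2 + (t.2.1 : ℝ) ^ 2 + (t.2.2.1 : ℝ) ^ 2 + (t.2.2.2 : ℝ) ^ 2 ≤ B ^ 2} =
      f '' {τ : ℤ × ℤ |
        (τ ≠ 0 ∧ Int.gcd τ.1 τ.2 = 1) ∧ τ.1 ≠ 0 ∧
        ((μ : ℝ) ^ 2 + (lam : ℝ) ^ 2) * (τ.1 : ℝ) ^ 2 +
          (((μ₁ : ℝ) ^ 2 * (d : ℝ) + (a₁ : ℝ) * (lam : ℝ) ^ 2) ^ 2 +
            ((μ₁ : ℝ) * (lam : ℝ)) ^ 2) * (τ.2 : ℝ) ^ 2 ≤ B ^ 2} := by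
    ext ⟨t1, t2, t3, t4⟩
    simp only [Set.mem_setOf_eq, Set.mem_image]
    constructor
    · rintro ⟨⟨ht0, hgcd⟩, htne, hlin1, hlin2, hcub, hht⟩
      -- solve for τ₀
      obtain ⟨τ₀, h0, h1⟩ := aux_solve (p := lam) (q := -μ) (x := t1) (y := t2)
        hcml.symm.neg_right (by linarith) (Or.inr (neg_ne_zero.mpr hμ))
      have h0' : t1 = μ * τ₀ := by linarith
      -- solve for τ₃
      have key : μ₁ * lam * t3 = -(E * t4) := by
        apply mul_left_cancel₀ hd0
        rw [hμ₁, ha₁] at hlin2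
        rw [hEdef]
        linear_combination hlin2
      obtain ⟨τ₃, h2, h3⟩ := aux_solve hcm1lE key hE0
      have h2' : t3 = -E * τ₃ := by linarith
      have hτ₀0 : τ₀ ≠ 0 := by
        rintro rfl
        apply htne
        rw [h0', h1]
        simp
      refine ⟨(τ₀, τ₃), ⟨⟨?_, ?_⟩, hτ₀0, ?_⟩, ?_⟩
      · simp only [ne_eq, Prod.mk_eq_zero, not_and]
        intro h; exact absurd h hτ₀0
      · rw [h0', h1, h2', h3] at hgcd
        rwa [aux_gcd μ lam (-E) (μ₁ * lam) τ₀ τ₃ hprim hgcd2] at hgcd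
      · rw [h0', h1, h2', h3] at hht
        rw [hEdef] at hht
        push_cast at hht ⊢
        nlinarith [hht]
      · rw [hfdef]
        simp only [Prod.mk.injEq]
        exact ⟨h0'.symm, h1.symm, h2'.symm, h3.symm⟩
    · rintro ⟨⟨τ₀, τ₃⟩, ⟨⟨hτ0, hgcd⟩, hτ₀0, hht⟩, hft⟩
      rw [hfdef] at hft
      simp only [Prod.mk.injEq] at hft
      obtain ⟨h1, h2, h3, h4⟩ := hft
      subst h1; subst h2; subst h3; subst h4
      refine ⟨⟨?_, ?_⟩, ?_, by ring, ?_, ?_, ?_⟩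
      · simp only [ne_eq, Prod.mk_eq_zero, not_and]
        intro h
        exact absurd (by rcases mul_eq_zero.mp h with h | h; exact absurd h hμ; exact h) hτ₀0
      · rw [aux_gcd μ lam (-E) (μ₁ * lam) τ₀ τ₃ hprim hgcd2]
        exact hgcd
      · simp only [ne_eq, Prod.mk.injEq, not_and]
        intro h
        exact absurd (by rcases mul_eq_zero.mp h with h | h; exact absurd h hμ; exact h) hτ₀0
      · rw [hμ₁, ha₁, hEdef]; ring
      · rw [ha₁, hμ₁, hEdef]; ring
      · rw [hEdef]
        push_cast at hht ⊢
        nlinarith [hht]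
  rw [hSeq, Set.ncard_image_of_injective _ hinj]
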